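/- arXiv:2004.07643 — 2 statements merged into one kernel-verified Lean document; each statement's English description precedes it below -/
import Mathlib

section
/- Let X ⊆ {0,1}^ℤ be a subshift and X̃ its hereditary closure. Then the topological entropy of X̃ is at least d(X,S): h(X̃,S) ≥ d(X,S). -/
open MeasureTheory Filter Real
open scoped ENNReal

attribute [local instance] Classical.propDecidable

/-- The two-sided binary sequence space `{0,1}^ℤ`. -/
abbrev Omega : Type := ℤ → Bool

/-- The left shift. -/
def shift (x : Omega) : Omega := fun n => x (n + 1)

/-- The cylinder set of a word `W` of length `n`, read from coordinate `0`. -/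
def cyl (n : ℕ) (W : Fin n → Bool) : Set Omega := {x | ∀ i : Fin n, x ((i : ℕ) : ℤ) = W i}

/-- The language of `X`: words of length `n` appearing (at position 0) in some point of `X`. -/
def lang (X : Set Omega) (n : ℕ) : Set (Fin n → Bool) :=
  {W | ∃ x ∈ X, ∀ i : Fin n, x ((i : ℕ) : ℤ) = W i}

/-- Number of ones in a word. -/
def ones {n : ℕ} (W : Fin n → Bool) : ℕ := (Finset.univ.filter fun i => W i = true).card

/-- `maxOnes X n` is the maximal number of ones in an allowed word of length `n`. -/
noncomputable def maxOnes (X : Set Omega) (n : ℕ) : ℕ :=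
  (Finset.univ.filter fun W : Fin n → Bool => W ∈ lang X n).sup ones

/-- `d(X,S)`: the supremum over shift-invariant Borel probability measures concentrated
on `X` of the measure of the cylinder `[1] = {x | x 0 = true}`. -/
noncomputable def dsup (X : Set Omega) : ℝ :=
  ⨆ μ : {μ : Measure Omega // IsProbabilityMeasure μ ∧ μ X = 1 ∧ Measure.map shift μ = μ},
    ((μ : Measure Omega) {x | x 0 = true}).toReal

/-- The hereditary closure of `X`. -/
def her (X : Set Omega) : Set Omega := {z | ∃ x ∈ X, ∀ i, z i ≤ x i}

-- Lemma B: 2^(maxOnes X n) ≤ ncard (lang (her X) n)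
lemma lemB (X : Set Omega) (hne : X.Nonempty) (n : ℕ) :
    2 ^ (maxOnes X n) ≤ (lang (her X) n).ncard := by
  obtain ⟨x, hx⟩ := hne
  -- the filtered finset is nonempty
  have hWx : (fun i : Fin n => x ((i : ℕ) : ℤ)) ∈ lang X n := ⟨x, hx, fun i => rfl⟩
  have hns : (Finset.univ.filter fun W : Fin n → Bool => W ∈ lang X n).Nonempty :=
    ⟨_, Finset.mem_filter.2 ⟨Finset.mem_univ _, hWx⟩⟩
  obtain ⟨W, hWmem, hWsup⟩ := Finset.exists_mem_eq_sup _ hns ones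
  have hWlang : W ∈ lang X n := (Finset.mem_filter.1 hWmem).2
  obtain ⟨x', hx', hx'W⟩ := hWlang
  set T : Finset (Fin n) := Finset.univ.filter fun i => W i = true with hT
  have hTcard : T.card = maxOnes X n := by
    simp only [maxOnes]; rw [hWsup]; rfl
  -- injection from powerset of T
  set f : Finset (Fin n) → (Fin n → Bool) := fun S i => decide (i ∈ S) with hf
  have hfinj : Function.Injective f := by
    intro S S' h
    ext i
    have := congrFun h i
    simp only [hf, decide_eq_decide] at this
    exact this
  have hfmem : ∀ S ∈ T.powerset, f S ∈ lang (her X) n := by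
    intro S hS
    rw [Finset.mem_powerset] at hS
    refine ⟨fun j => if h : 0 ≤ j ∧ j < (n : ℤ) then f S ⟨j.toNat, by omega⟩ else x' j, ?_, ?_⟩
    · refine ⟨x', hx', fun j => ?_⟩
      by_cases h : 0 ≤ j ∧ j < (n : ℤ)
      · simp only [h, dif_pos]
        by_cases hmem : (⟨j.toNat, by omega⟩ : Fin n) ∈ S
        · have hW : W ⟨j.toNat, by omega⟩ = true := by
            have := hS hmem
            simpa [hT] using this
          have hx'j : x' j = true := by
            have := hx'W ⟨j.toNat, by omega⟩
            simpa [Int.toNat_of_nonneg h.1] using this.trans hW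
          simp [hf, hmem, hx'j]
        · simp [hf, hmem]
      · simp [h]
    · intro i
      have h : 0 ≤ ((i : ℕ) : ℤ) ∧ ((i : ℕ) : ℤ) < (n : ℤ) := by
        constructor
        · exact Int.natCast_nonneg _
        · exact_mod_cast i.isLt
      simp only []
      rw [dif_pos h]
      have hfin : (⟨((i : ℕ) : ℤ).toNat, by omega⟩ : Fin n) = i := by
        apply Fin.ext; simp
      rw [hfin]
  -- count
  have hsub : T.powerset.image f ⊆ (lang (her X) n).toFinset := by
    intro V hV
    obtain ⟨S, hS, rfl⟩ := Finset.mem_image.1 hV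
    simpa using hfmem S hS
  calc 2 ^ (maxOnes X n) = T.powerset.card := by rw [Finset.card_powerset, hTcard]
    _ = (T.powerset.image f).card := (Finset.card_image_of_injective _ hfinj).symm
    _ ≤ (lang (her X) n).toFinset.card := Finset.card_le_card hsub
    _ = (lang (her X) n).ncard := by rw [Set.ncard_eq_toFinset_card']

lemma shift_measurable : Measurable shift :=
  measurable_pi_lambda _ (fun n => measurable_pi_apply _)

lemma lemA (X : Set Omega) (μ : Measure Omega) (hp : IsProbabilityMeasure μ)
    (hX : μ X = 1) (hm : Measure.map shift μ = μ) (n : ℕ) (hn : 0 < n) :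
    (n : ℝ≥0∞) * μ {x | x 0 = true} ≤ (maxOnes X n : ℝ≥0∞) := by
  set A : ℤ → Set Omega := fun k => {x | x k = true} with hA
  have hAmeas : ∀ k, MeasurableSet (A k) := by
    intro k
    have : A k = (fun x : Omega => x k) ⁻¹' {true} := by ext x; simp [hA]
    rw [this]
    exact (measurable_pi_apply k) (measurableSet_singleton true)
  -- invariance
  have hinv : ∀ k : ℤ, μ (A (k+1)) = μ (A k) := by
    intro k
    conv_rhs => rw [← hm]
    rw [Measure.map_apply shift_measurable (hAmeas k)]
    rfl
  have hconst : ∀ k : ℕ, μ (A k) = μ (A 0) := by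
    intro k
    induction k with
    | zero => rfl
    | succ m ih =>
      have hc : ((m+1 : ℕ) : ℤ) = (m : ℤ) + 1 := by push_cast; ring
      rw [hc, hinv m]
      exact ih
  -- sum of measures = lintegral of count
  have hsum : ∑ i : Fin n, μ (A i) = (n : ℝ≥0∞) * μ (A 0) := by
    have h1 : ∑ i : Fin n, μ (A ((i : ℕ) : ℤ)) = ∑ _i : Fin n, μ (A 0) :=
      Finset.sum_congr rfl (fun i _ => hconst i)
    rw [h1]
    simp [Finset.card_univ, mul_comm]
  set g : Omega → ℝ≥0∞ := fun x => ∑ i : Fin n, (A i).indicator 1 x with hg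
  have hgmeas : Measurable g :=
    Finset.measurable_sum _ (fun i _ => (measurable_const.indicator (hAmeas i)))
  have hlint : ∑ i : Fin n, μ (A i) = ∫⁻ x, g x ∂μ := by
    simp only [hg]
    have hls := lintegral_finset_sum (μ := μ) Finset.univ
      (f := fun (i : Fin n) => (A ((i : ℕ) : ℤ)).indicator (1 : Omega → ℝ≥0∞))
      (fun i _ => measurable_one.indicator (hAmeas ((i : ℕ) : ℤ)))
    rw [hls]
    refine Finset.sum_congr rfl (fun i _ => ?_)
    rw [lintegral_indicator (hAmeas ((i : ℕ) : ℤ)) 1]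
    simp
  -- pointwise: for x ∈ X, g x ≤ maxOnes
  have hgX : ∀ x ∈ X, g x ≤ (maxOnes X n : ℝ≥0∞) := by
    intro x hx
    have hgx : g x = ((ones fun i : Fin n => x ((i : ℕ) : ℤ)) : ℝ≥0∞) := by
      rw [hg]
      simp only [Set.indicator_apply, hA, Set.mem_setOf_eq, Pi.one_apply]
      rw [Finset.sum_boole]
      rfl
    rw [hgx]
    have : ones (fun i : Fin n => x ((i : ℕ) : ℤ)) ≤ maxOnes X n :=
      Finset.le_sup (Finset.mem_filter.2 ⟨Finset.mem_univ _, ⟨x, hx, fun i => rfl⟩⟩)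
    exact_mod_cast this
  -- a.e. bound
  have hC : MeasurableSet {x | (maxOnes X n : ℝ≥0∞) < g x} :=
    measurableSet_lt measurable_const hgmeas
  have hCnull : μ {x | (maxOnes X n : ℝ≥0∞) < g x} = 0 := by
    have hsub : X ⊆ {x | (maxOnes X n : ℝ≥0∞) < g x}ᶜ := by
      intro x hx
      simp only [Set.mem_compl_iff, Set.mem_setOf_eq, not_lt]
      exact hgX x hx
    have h1 : μ {x | (maxOnes X n : ℝ≥0∞) < g x}ᶜ = 1 :=
      le_antisymm prob_le_one (hX ▸ measure_mono hsub)
    have := (prob_compl_eq_zero_iff hC.compl).2 h1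
    rwa [compl_compl] at this
  have hae : ∀ᵐ x ∂μ, g x ≤ (maxOnes X n : ℝ≥0∞) := by
    rw [ae_iff]
    simpa [not_le] using hCnull
  have hint : ∫⁻ x, g x ∂μ ≤ (maxOnes X n : ℝ≥0∞) := by
    calc ∫⁻ x, g x ∂μ ≤ ∫⁻ _, (maxOnes X n : ℝ≥0∞) ∂μ := lintegral_mono_ae hae
      _ = (maxOnes X n : ℝ≥0∞) := by simp
  rw [← hsum] at *
  rw [hlint]
  exact hint

/-- the topological entropy of the hereditary closure dominates the density:
`h(X̃,S) ≥ d(X,S)`. -/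
theorem stmt8 (X : Set Omega) (hcl : IsClosed X) (hne : X.Nonempty)
    (hinv : shift '' X = X)
    (htil : ℝ)
    (hent : Tendsto (fun n : ℕ => logb 2 (((lang (her X) n)).ncard) / n) atTop (nhds htil)) :
    dsup X ≤ htil := by
  -- key per-n bound: maxOnes X n ≤ logb 2 (ncard)
  have key : ∀ n : ℕ, (maxOnes X n : ℝ) ≤ logb 2 ((lang (her X) n).ncard) := by
    intro n
    have hB := lemB X hne n
    have hB' : ((2 : ℝ) ^ (maxOnes X n)) ≤ ((lang (her X) n).ncard : ℝ) := by
      exact_mod_cast hB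
    have h2 : logb 2 ((2 : ℝ) ^ (maxOnes X n)) ≤ logb 2 ((lang (her X) n).ncard) :=
      Real.logb_le_logb_of_le one_lt_two (by positivity) hB'
    rwa [Real.logb_pow, Real.logb_self_eq_one one_lt_two, mul_one] at h2
  have hone : ∀ n : ℕ, 1 ≤ n → (0:ℝ) ≤ logb 2 ((lang (her X) n).ncard) / n := by
    intro n hn
    apply div_nonneg _ (by positivity)
    apply Real.logb_nonneg one_lt_two
    have : 1 ≤ (lang (her X) n).ncard := le_trans (Nat.one_le_two_pow) (lemB X hne n)
    exact_mod_cast this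
  have hhtil : 0 ≤ htil :=
    ge_of_tendsto hent (eventually_atTop.2 ⟨1, fun n hn => hone n hn⟩)
  apply Real.iSup_le _ hhtil
  rintro ⟨μ, hp, hX, hm⟩
  have hbound : ∀ n : ℕ, 1 ≤ n →
      (μ {x | x 0 = true}).toReal ≤ logb 2 ((lang (her X) n).ncard) / n := by
    intro n hn
    have hA := lemA X μ hp hX hm n hn
    have hfin : (maxOnes X n : ℝ≥0∞) ≠ ∞ := ENNReal.natCast_ne_top _
    have h1 : ((n : ℝ≥0∞) * μ {x | x 0 = true}).toReal ≤ (maxOnes X n : ℝ) := by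
      have := ENNReal.toReal_mono hfin hA
      simpa using this
    have h2 : (n : ℝ) * (μ {x | x 0 = true}).toReal ≤ (maxOnes X n : ℝ) := by
      simpa using h1
    have hn0 : (0:ℝ) < n := by exact_mod_cast hn
    have h3 : (μ {x | x 0 = true}).toReal ≤ (maxOnes X n : ℝ) / n := by
      rw [le_div_iff₀ hn0]; linarith
    refine le_trans h3 ?_
    gcongr
    exact key n
  exact ge_of_tendsto hent (eventually_atTop.2 ⟨1, fun n hn => hbound n hn⟩)
end

section
/- Let ν be an invariant measure on subshift X and κ = ν * B_{1/2,1/2}. If C is a word in L_n(X) that is ν-ones-maximal, i.e., #₁C = max{#₁W : W ∈ L_n(X), ν(W) > 0}, then κ(C) = ν(C)·2^{-#₁C}. -/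
open MeasureTheory Filter Real
open scoped ENNReal

attribute [local instance] Classical.propDecidable

/-- Coordinatewise multiplication `Q(x,y)_i = x_i · y_i`. -/
def Qmul (p : Omega × Omega) : Omega := fun i => p.1 i && p.2 i

lemma card_agree (n : ℕ) (s : Finset (Fin n)) (C : Fin n → Bool) :
    (Finset.univ.filter (fun V : Fin n → Bool => ∀ i ∈ s, V i = C i)).card
      = 2 ^ (n - s.card) := by
  have e : {V : Fin n → Bool // ∀ i ∈ s, V i = C i} ≃ ({ i : Fin n // i ∉ s} → Bool) :=
    { toFun := fun V j => V.1 j.1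
      invFun := fun f => ⟨fun i => if h : i ∈ s then C i else f ⟨i, h⟩,
        fun i hi => by simp [hi]⟩
      left_inv := fun V => by
        ext i
        by_cases h : i ∈ s <;> simp [h, V.2 i]
      right_inv := fun f => by
        ext j
        simp [j.2] }
  have h1 : (Finset.univ.filter (fun V : Fin n → Bool => ∀ i ∈ s, V i = C i)).card
      = Fintype.card {V : Fin n → Bool // ∀ i ∈ s, V i = C i} := by
    rw [Fintype.card_subtype]
  rw [h1, Fintype.card_congr e, Fintype.card_fun]
  congr 1
  have : Fintype.card { i : Fin n // i ∉ s }
      = Fintype.card (Fin n) - Fintype.card {i : Fin n // i ∈ s} :=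
    Fintype.card_subtype_compl _
  rw [this, Fintype.card_fin, Fintype.card_coe]

lemma measurableSet_cyl (n : ℕ) (W : Fin n → Bool) : MeasurableSet (cyl n W) := by
  have : cyl n W = ⋂ i : Fin n, (fun x : Omega => x ((i : ℕ) : ℤ)) ⁻¹' {W i} := by
    ext x; simp [cyl]
  rw [this]
  exact MeasurableSet.iInter fun i => (measurable_pi_apply _) (measurableSet_singleton _)

lemma cyl_disjoint {n : ℕ} {W W' : Fin n → Bool} (h : W ≠ W') :
    Disjoint (cyl n W) (cyl n W') := by
  rw [Set.disjoint_left]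
  intro x h1 h2
  exact h (funext fun i => (h1 i).symm.trans (h2 i))

lemma measurable_Qmul : Measurable Qmul := by
  apply measurable_pi_lambda
  intro i
  have h : (fun p : Omega × Omega => p.1 i && p.2 i)
      = fun p => if p.1 i = true then p.2 i else false := by
    funext p; cases hp : p.1 i <;> simp
  rw [show (fun p : Omega × Omega => Qmul p i) = fun p => p.1 i && p.2 i from rfl, h]
  exact Measurable.ite (((measurable_pi_apply i).comp measurable_fst) (measurableSet_singleton _))
    ((measurable_pi_apply i).comp measurable_snd) measurable_const

/-- if `C ∈ L_n(X)` is `ν`-ones-maximal, i.e.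
`#₁C = max{#₁W : W ∈ L_n(X), ν(W) > 0}`, then `κ(C) = ν(C)·2^{-#₁C}` for
`κ = ν * B_{1/2,1/2}`. -/
theorem stmt11 (X : Set Omega) (hcl : IsClosed X) (hne : X.Nonempty)
    (hinv : shift '' X = X)
    (ν : Measure Omega) [IsProbabilityMeasure ν] (hsupp : ν X = 1)
    (hinvν : Measure.map shift ν = ν)
    (B : Measure Omega) [IsProbabilityMeasure B]
    (hB : ∀ (m : ℕ) (W : Fin m → Bool), B (cyl m W) = (2 : ℝ≥0∞)⁻¹ ^ m)
    (n : ℕ) (C : Fin n → Bool) (hC : C ∈ lang X n)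
    (hmax : ones C =
      (Finset.univ.filter
        (fun W : Fin n → Bool => W ∈ lang X n ∧ ν (cyl n W) ≠ 0)).sup ones) :
    Measure.map Qmul (ν.prod B) (cyl n C) = ν (cyl n C) * (2 : ℝ≥0∞)⁻¹ ^ ones C := by
  classical
  set SW : (Fin n → Bool) → Set Omega :=
    fun W => {y : Omega | ∀ i : Fin n, (W i && y ((i : ℕ) : ℤ)) = C i} with hSWdef
  have hSWmeas : ∀ W, MeasurableSet (SW W) := by
    intro W
    have hEq : SW W = ⋂ i : Fin n,
        (fun y : Omega => W i && y ((i : ℕ) : ℤ)) ⁻¹' {C i} := by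
      ext y; simp [hSWdef]
    rw [hEq]
    refine MeasurableSet.iInter fun i => ?_
    have hm : Measurable (fun y : Omega => W i && y ((i : ℕ) : ℤ)) := by
      cases h : W i
      · simpa using (measurable_const : Measurable fun _ : Omega => false)
      · simpa using measurable_pi_apply ((i : ℕ) : ℤ)
    exact hm (measurableSet_singleton _)
  have hdecomp : Qmul ⁻¹' cyl n C
      = ⋃ W ∈ (Finset.univ : Finset (Fin n → Bool)), (cyl n W) ×ˢ (SW W) := by
    ext p
    simp only [Set.mem_preimage, cyl, Set.mem_setOf_eq, Set.mem_iUnion, Set.mem_prod,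
      Finset.mem_univ, exists_true_left, Qmul, hSWdef]
    constructor
    · intro h
      exact ⟨fun i => p.1 ((i : ℕ) : ℤ), ⟨fun i => rfl, fun i => h i⟩⟩
    · rintro ⟨W, hW1, hW2⟩ i
      rw [hW1 i]; exact hW2 i
  rw [Measure.map_apply measurable_Qmul (measurableSet_cyl n C), hdecomp,
    measure_biUnion_finset ?_ (fun W _ => (measurableSet_cyl n W).prod (hSWmeas W))]
  swap
  · intro W _ W' _ hWW'
    rw [Function.onFun]
    exact Set.disjoint_of_subset (Set.prod_subset_prod_iff.mpr (Or.inl ⟨le_rfl, le_rfl⟩))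
      le_rfl (Set.disjoint_prod.mpr (Or.inl (cyl_disjoint hWW')))
  have hones_le : ∀ W : Fin n → Bool, ones W ≤ n := fun W => by
    simpa [ones] using (Finset.card_filter_le Finset.univ fun i => W i = true)
  -- value of B on partial cylinders, for W ≥ C
  have hBSW : ∀ W : Fin n → Bool, (∀ i, C i = true → W i = true) →
      B (SW W) = (2 : ℝ≥0∞)⁻¹ ^ (ones W) := by
    intro W hge
    set F : Finset (Fin n → Bool) :=
      Finset.univ.filter (fun V => ∀ i, W i = true → V i = C i) with hF
    have hSWeq : SW W = ⋃ V ∈ F, cyl n V := by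
      ext y
      simp only [hSWdef, Set.mem_setOf_eq, Set.mem_iUnion, hF, Finset.mem_filter,
        Finset.mem_univ, true_and, cyl]
      constructor
      · intro h
        refine ⟨fun i => y ((i : ℕ) : ℤ), ⟨fun i hi => ?_, fun i => rfl⟩⟩
        have h2 := h i; rwa [hi, Bool.true_and] at h2
      · rintro ⟨V, hV1, hV2⟩ i
        cases hWi : W i
        · rw [Bool.false_and]
          cases hCi : C i
          · rfl
          · exact absurd (hge i hCi) (by rw [hWi]; exact Bool.false_ne_true)
        · rw [Bool.true_and, hV2 i, hV1 i hWi]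
    rw [hSWeq, measure_biUnion_finset (fun V _ V' _ h => cyl_disjoint h)
      (fun V _ => measurableSet_cyl n V)]
    rw [Finset.sum_congr rfl (fun V _ => hB n V), Finset.sum_const, nsmul_eq_mul]
    have hcard : F.card = 2 ^ (n - ones W) := by
      have hc := card_agree n (Finset.univ.filter fun i => W i = true) C
      have hpred : F = Finset.univ.filter
          (fun V : Fin n → Bool => ∀ i ∈ (Finset.univ.filter fun i => W i = true), V i = C i) := by
        apply Finset.filter_congr
        intro V _
        simp [Finset.mem_filter]
      rw [hpred, hc]
      rfl
    rw [hcard]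
    have hk := hones_le W
    rw [Nat.cast_pow, Nat.cast_ofNat]
    have hsplit : ((2 : ℝ≥0∞))⁻¹ ^ n = (2 : ℝ≥0∞)⁻¹ ^ (n - ones W) * (2 : ℝ≥0∞)⁻¹ ^ (ones W) := by
      rw [← pow_add, Nat.sub_add_cancel hk]
    rw [hsplit, ← mul_assoc, ← mul_pow,
      ENNReal.mul_inv_cancel (by norm_num) (by norm_num), one_pow, one_mul]
  -- the main sum
  rw [Finset.sum_congr rfl (fun W _ => Measure.prod_prod (cyl n W) (SW W))]
  rw [Finset.sum_eq_single C]
  · rw [hBSW C (fun i h => h)]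
  · intro W _ hWC
    by_cases hge : ∀ i, C i = true → W i = true
    · have hν0 : ν (cyl n W) = 0 := by
        by_contra hν
        have hXc : ν Xᶜ = 0 := by
          rw [measure_compl hcl.measurableSet (measure_ne_top ν X), hsupp, measure_univ,
            tsub_self]
        have hlang : W ∈ lang X n := by
          by_contra hl
          apply hν
          refine measure_mono_null (fun x hx => ?_) hXc
          exact fun hxX => hl ⟨x, hxX, hx⟩
        have hle : ones W ≤ ones C := by
          rw [hmax]
          refine Finset.le_sup ?_
          simp only [Finset.mem_filter, Finset.mem_univ, true_and]
          exact ⟨hlang, hν⟩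
        have hi' : ∃ i, W i ≠ C i := by
          by_contra hall; push_neg at hall; exact hWC (funext hall)
        obtain ⟨i, hi⟩ := hi'
        have hCi : C i = false := by
          cases hCi : C i
          · rfl
          · exact absurd ((hge i hCi).trans hCi.symm) hi
        have hWi : W i = true := by
          cases hWi : W i
          · exact absurd (hWi.trans hCi.symm) hi
          · rfl
        have hsub : (Finset.univ.filter fun j => C j = true)
            ⊆ (Finset.univ.filter fun j => W j = true) := by
          intro j hj
          simp only [Finset.mem_filter, Finset.mem_univ, true_and] at hj ⊢
          exact hge j hj
        have hlt : ones C < ones W :=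
          Finset.card_lt_card ((Finset.ssubset_iff_of_subset hsub).mpr
            ⟨i, by simp [hWi], by simp [hCi]⟩)
        omega
      rw [hν0, zero_mul]
    · push_neg at hge
      obtain ⟨i, hCi, hWi⟩ := hge
      have hSWe : SW W = ∅ := by
        ext y
        simp only [hSWdef, Set.mem_setOf_eq, Set.mem_empty_iff_false, iff_false]
        intro h
        have h2 := h i
        have hWf : W i = false := by
          cases h' : W i
          · rfl
          · exact absurd h' hWi
        rw [hWf, Bool.false_and, hCi] at h2
        exact Bool.false_ne_true h2
      rw [hSWe, measure_empty, mul_zero]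
  · intro h; exact absurd (Finset.mem_univ C) h
end
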